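/- Let f and g be probability measures on ℝ with equal mean value and finite second moments. Then d_2(f,g) ≤ (1/2) W_2(f,g)^2 + min{∫_ℝ |x|^2 df(x), ∫_ℝ |x|^2 dg(x)}^{1/2} · W_2(f,g). -/

import Mathlib

open MeasureTheory
open scoped ENNReal

noncomputable section

/-- `π` is a coupling of the probability measures `f` and `g` on `ℝ`. -/
def IsCouplingR (π : Measure (ℝ × ℝ)) (f g : Measure ℝ) : Prop :=
  π.map Prod.fst = f ∧ π.map Prod.snd = g

/-- The Wasserstein distance of order `p` between probability measures on `ℝ`. -/
def WassersteinR (p : ℝ) (f g : Measure ℝ) : ℝ≥0∞ :=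
  (⨅ π : {π : Measure (ℝ × ℝ) // IsCouplingR π f g},
    ∫⁻ x, ENNReal.ofReal (|x.1 - x.2| ^ p) ∂π.1) ^ (1 / p)

/-- The Fourier transform of the measure `f`. -/
def fourierT (f : Measure ℝ) (ξ : ℝ) : ℂ :=
  ∫ x, Complex.exp (-(Complex.I * (x : ℂ) * (ξ : ℂ))) ∂f

/-- The Toscani (Fourier-based) distance of order `s` between probability measures
on `ℝ`. -/
def ToscaniR (s : ℝ) (f g : Measure ℝ) : ℝ≥0∞ :=
  ⨆ ξ : {ξ : ℝ // ξ ≠ 0}, ENNReal.ofReal (‖fourierT f ξ - fourierT g ξ‖ / |ξ.1| ^ s)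

/-- The cumulative distribution function of the measure `f`. -/
def cdfR (f : Measure ℝ) (x : ℝ) : ℝ := (f (Set.Iic x)).toReal


section AuxProofs
open Complex

lemma aux1 (t : ℝ) : ‖Complex.exp (t * I) - 1‖ ≤ |t| := by
  rw [Complex.exp_mul_I]
  have h : ‖Complex.cos t + Complex.sin t * I - 1‖
      = Real.sqrt ((Real.cos t - 1)^2 + (Real.sin t)^2) := by
    rw [← Complex.ofReal_sin, ← Complex.ofReal_cos]
    rw [show (Real.cos t : ℂ) + (Real.sin t : ℂ) * I - 1
        = Complex.mk (Real.cos t - 1) (Real.sin t) by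
      apply Complex.ext <;> simp [Complex.cos_ofReal_re, Complex.sin_ofReal_re]]
    simp [Complex.norm_def, Complex.normSq_mk]; ring_nf
  rw [h]
  have hc := Real.one_sub_sq_div_two_le_cos (x := t)
  have h2 : (Real.cos t - 1)^2 + (Real.sin t)^2 = 2 - 2 * Real.cos t := by
    have := Real.sin_sq_add_cos_sq t; nlinarith
  rw [h2]
  calc Real.sqrt (2 - 2 * Real.cos t) ≤ Real.sqrt (t^2) := by
        apply Real.sqrt_le_sqrt; nlinarith
    _ = |t| := Real.sqrt_sq_eq_abs t

lemma aux2_nonneg {t : ℝ} (ht : 0 ≤ t) :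
    ‖Complex.exp (t * I) - 1 - t * I‖ ≤ t ^ 2 / 2 := by
  have hlin : ∀ s : ℝ, HasDerivAt (fun s : ℝ => (s : ℂ) * I) I s := by
    intro s
    simpa using (Complex.ofRealCLM.hasDerivAt (x := s)).mul_const I
  have hF : ∀ s : ℝ, HasDerivAt (fun s : ℝ => Complex.exp ((s : ℂ) * I) - 1 - s * I)
      ((Complex.exp ((s : ℂ) * I) - 1) * I) s := by
    intro s
    have h1 : HasDerivAt (fun s : ℝ => Complex.exp ((s : ℂ) * I))
        (Complex.exp ((s : ℂ) * I) * I) s := by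
      simpa using (hlin s).cexp
    have := (h1.sub_const 1).sub (hlin s)
    exact this.congr_deriv (by ring)
  have hcont : Continuous fun s : ℝ => (Complex.exp ((s : ℂ) * I) - 1) * I := by
    continuity
  have heq : (∫ s in (0:ℝ)..t, (Complex.exp ((s : ℂ) * I) - 1) * I)
      = Complex.exp ((t : ℂ) * I) - 1 - t * I := by
    rw [intervalIntegral.integral_eq_sub_of_hasDerivAt (fun s _ => hF s)
      (hcont.intervalIntegrable 0 t)]
    simp
  rw [← heq]
  calc ‖∫ s in (0:ℝ)..t, (Complex.exp ((s : ℂ) * I) - 1) * I‖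
      ≤ |∫ s in (0:ℝ)..t, ‖(Complex.exp ((s : ℂ) * I) - 1) * I‖| :=
        intervalIntegral.norm_integral_le_abs_integral_norm
    _ = ∫ s in (0:ℝ)..t, ‖(Complex.exp ((s : ℂ) * I) - 1) * I‖ := by
        apply _root_.abs_of_nonneg
        apply intervalIntegral.integral_nonneg ht
        intro s _; positivity
    _ ≤ ∫ s in (0:ℝ)..t, s := by
        apply intervalIntegral.integral_mono_on ht
          (hcont.norm.intervalIntegrable 0 t) (continuous_id.intervalIntegrable 0 t)
        intro s hs
        rw [norm_mul]
        calc ‖Complex.exp ((s : ℂ) * I) - 1‖ * ‖I‖ ≤ |s| * 1 := by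
              simpa using aux1 s
          _ = s := by rw [mul_one, _root_.abs_of_nonneg hs.1]
    _ = t ^ 2 / 2 := by rw [integral_id]; ring

lemma aux2 (t : ℝ) : ‖Complex.exp (t * I) - 1 - t * I‖ ≤ t ^ 2 / 2 := by
  rcases le_total 0 t with ht | ht
  · exact aux2_nonneg ht
  · have h := aux2_nonneg (t := -t) (by linarith)
    have hconj : (starRingEnd ℂ) (Complex.exp ((t:ℂ) * I) - 1 - t * I)
        = Complex.exp ((-t : ℝ) * I) - 1 - (-t : ℝ) * I := by
      simp [← Complex.exp_conj, map_sub, map_mul, Complex.conj_I]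
    calc ‖Complex.exp ((t:ℂ) * I) - 1 - t * I‖
        = ‖(starRingEnd ℂ) (Complex.exp ((t:ℂ) * I) - 1 - t * I)‖ :=
          (Complex.norm_conj _).symm
      _ = ‖Complex.exp ((-t : ℝ) * I) - 1 - (-t : ℝ) * I‖ := by rw [hconj]
      _ ≤ (-t) ^ 2 / 2 := aux2_nonneg (by linarith)
      _ = t ^ 2 / 2 := by ring

lemma absmul_le (x y : ℝ) : |x| * |y| ≤ 1/2 * (x ^ 2 + y ^ 2) := by
  nlinarith [sq_nonneg (|x| - |y|), _root_.sq_abs x, _root_.sq_abs y, abs_nonneg x, abs_nonneg y]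

lemma key {α : Type*} [MeasurableSpace α] (π : Measure α) [IsProbabilityMeasure π]
    (X Y : α → ℝ) (ξ : ℝ)
    (hX : Integrable X π) (hY : Integrable Y π)
    (hX2 : Integrable (fun a => X a ^ 2) π) (hY2 : Integrable (fun a => Y a ^ 2) π)
    (hmean : ∫ a, X a ∂π = ∫ a, Y a ∂π) :
    ‖∫ a, (Complex.exp (-(Complex.I * X a * ξ))
        - Complex.exp (-(Complex.I * Y a * ξ))) ∂π‖
      ≤ ξ ^ 2 * ((1/2) * ∫ a, (X a - Y a) ^ 2 ∂π
          + Real.sqrt (∫ a, (Y a) ^ 2 ∂π) * Real.sqrt (∫ a, (X a - Y a) ^ 2 ∂π)) := by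
  set u : α → ℝ := fun a => -(X a * ξ) with hu
  set v : α → ℝ := fun a => -(Y a * ξ) with hv
  have hXm := hX.aestronglyMeasurable
  have hYm := hY.aestronglyMeasurable
  have hum : AEStronglyMeasurable u π := (hXm.mul_const ξ).neg
  have hvm : AEStronglyMeasurable v π := (hYm.mul_const ξ).neg
  have hdm : AEStronglyMeasurable (fun a => u a - v a) π := hum.sub hvm
  have hdCm : AEStronglyMeasurable (fun a => ((u a - v a : ℝ) : ℂ)) π :=
    Complex.continuous_ofReal.comp_aestronglyMeasurable hdm
  have hEv : AEStronglyMeasurable (fun a => Complex.exp ((v a : ℂ) * I)) π :=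
    (Complex.continuous_exp.comp (Complex.continuous_ofReal.mul continuous_const)
      ).comp_aestronglyMeasurable hvm
  have hEd : AEStronglyMeasurable (fun a => Complex.exp (((u a - v a : ℝ) : ℂ) * I)) π :=
    (Complex.continuous_exp.comp (Complex.continuous_ofReal.mul continuous_const)
      ).comp_aestronglyMeasurable hdm
  -- integrability of squares
  have hXY : Integrable (fun a => X a * Y a) π := by
    refine Integrable.mono' (((hX2.add hY2).const_mul (1/2))) (hXm.mul hYm) ?_
    filter_upwards with a
    rw [Real.norm_eq_abs, abs_mul]
    simp only [Pi.add_apply]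
    exact absmul_le _ _
  have hsub2 : Integrable (fun a => (X a - Y a) ^ 2) π := by
    have h := (hX2.add hY2).sub (hXY.const_mul 2)
    refine h.congr (Filter.Eventually.of_forall fun a => ?_)
    simp only [Pi.add_apply, Pi.sub_apply]
    ring
  have hd2 : Integrable (fun a => (u a - v a) ^ 2) π := by
    have h := hsub2.const_mul (ξ ^ 2)
    exact h.congr (Filter.Eventually.of_forall fun a => by simp only [hu, hv]; ring)
  have hv2 : Integrable (fun a => v a ^ 2) π := by
    have h := hY2.const_mul (ξ ^ 2)
    exact h.congr (Filter.Eventually.of_forall fun a => by simp only [hv]; ring)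
  have hdv : Integrable (fun a => |u a - v a| * |v a|) π := by
    refine Integrable.mono' ((hd2.add hv2).const_mul (1/2))
      ((continuous_abs.comp_aestronglyMeasurable hdm).mul
        (continuous_abs.comp_aestronglyMeasurable hvm)) ?_
    filter_upwards with a
    rw [Real.norm_eq_abs, abs_mul, _root_.abs_abs, _root_.abs_abs]
    simp only [Pi.add_apply]
    exact absmul_le _ _
  -- definitions of R, S
  set R : α → ℂ := fun a => Complex.exp ((v a : ℂ) * I) *
    (Complex.exp (((u a - v a : ℝ) : ℂ) * I) - 1 - ((u a - v a : ℝ) : ℂ) * I) with hRdef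
  set S : α → ℂ := fun a => ((u a - v a : ℝ) : ℂ) * (Complex.exp ((v a : ℂ) * I) - 1)
    with hSdef
  have hnormEv : ∀ a, ‖Complex.exp ((v a : ℂ) * I)‖ = 1 := fun a =>
    Complex.norm_exp_ofReal_mul_I (v a)
  have hRbound : ∀ a, ‖R a‖ ≤ (u a - v a) ^ 2 / 2 := by
    intro a
    rw [hRdef]
    simp only [norm_mul, hnormEv a, one_mul]
    exact aux2 (u a - v a)
  have hSbound : ∀ a, ‖S a‖ ≤ |u a - v a| * |v a| := by
    intro a
    rw [hSdef]
    simp only [norm_mul, Complex.norm_real, Real.norm_eq_abs]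
    exact mul_le_mul_of_nonneg_left (aux1 (v a)) (abs_nonneg _)
  have hR : Integrable R π := by
    refine Integrable.mono' (hd2.div_const 2) (hEv.mul ((hEd.sub aestronglyMeasurable_const).sub
      (hdCm.mul_const I))) ?_
    filter_upwards with a using hRbound a
  have hS : Integrable S π := by
    refine Integrable.mono' hdv (hdCm.mul (hEv.sub aestronglyMeasurable_const)) ?_
    filter_upwards with a using hSbound a
  -- rewrite the integrand
  have hexpX : ∀ a, Complex.exp (-(Complex.I * X a * ξ)) = Complex.exp (((u a : ℝ) : ℂ) * I) := by
    intro a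
    congr 1
    simp only [hu]
    push_cast
    ring
  have hexpY : ∀ a, Complex.exp (-(Complex.I * Y a * ξ)) = Complex.exp (((v a : ℝ) : ℂ) * I) := by
    intro a
    congr 1
    simp only [hv]
    push_cast
    ring
  have hptwise : ∀ a, Complex.exp (-(Complex.I * X a * ξ)) - Complex.exp (-(Complex.I * Y a * ξ))
      = R a + (u a - v a) • (I : ℂ) + I • S a := by
    intro a
    rw [hexpX a, hexpY a, hRdef, hSdef]
    have hmulexp : Complex.exp ((v a : ℂ) * I) * Complex.exp (((u a - v a : ℝ) : ℂ) * I)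
        = Complex.exp ((u a : ℂ) * I) := by
      rw [← Complex.exp_add]
      congr 1
      push_cast
      ring
    rw [smul_eq_mul, real_smul]
    linear_combination -hmulexp
  have hmean0 : ∫ a, (u a - v a) ∂π = 0 := by
    have h1 : ∫ a, (u a - v a) ∂π = ∫ a, (Y a - X a) * ξ ∂π := by
      apply integral_congr_ae
      filter_upwards with a
      simp only [hu, hv]
      ring
    rw [h1, integral_mul_const, integral_sub hY hX, hmean]
    ring
  have hintd : Integrable (fun a => (u a - v a) • (I : ℂ)) π := by
    have hd1 : Integrable (fun a => u a - v a) π := by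
      have h := (hY.sub hX).const_mul ξ
      exact h.congr (Filter.Eventually.of_forall fun a => by
        simp only [hu, hv, Pi.sub_apply]; ring)
    exact hd1.smul_const I
  have hsplit : (∫ a, (Complex.exp (-(Complex.I * X a * ξ))
        - Complex.exp (-(Complex.I * Y a * ξ))) ∂π)
      = (∫ a, R a ∂π) + I • (∫ a, S a ∂π) := by
    have hadd1 : Integrable (fun a => R a + (u a - v a) • (I : ℂ)) π := hR.add hintd
    have hIS : Integrable (fun a => I • S a) π := hS.smul I
    rw [integral_congr_ae (Filter.Eventually.of_forall hptwise),
      integral_add hadd1 hIS, integral_add hR hintd, integral_smul,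
      integral_smul_const, hmean0]
    simp
  rw [hsplit]
  calc ‖(∫ a, R a ∂π) + I • (∫ a, S a ∂π)‖
      ≤ ‖∫ a, R a ∂π‖ + ‖I • (∫ a, S a ∂π)‖ := norm_add_le _ _
    _ = ‖∫ a, R a ∂π‖ + ‖∫ a, S a ∂π‖ := by
        rw [norm_smul, Complex.norm_I, one_mul]
    _ ≤ (∫ a, ‖R a‖ ∂π) + (∫ a, ‖S a‖ ∂π) := by
        gcongr <;> exact norm_integral_le_integral_norm _
    _ ≤ (∫ a, (u a - v a) ^ 2 / 2 ∂π) + (∫ a, |u a - v a| * |v a| ∂π) := by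
        apply add_le_add
        · exact integral_mono hR.norm (hd2.div_const 2) hRbound
        · exact integral_mono hS.norm hdv hSbound
    _ ≤ ξ ^ 2 * ((1/2) * ∫ a, (X a - Y a) ^ 2 ∂π
          + Real.sqrt (∫ a, (Y a) ^ 2 ∂π) * Real.sqrt (∫ a, (X a - Y a) ^ 2 ∂π)) := by
        have e1 : (∫ a, (u a - v a) ^ 2 / 2 ∂π) = ξ ^ 2 / 2 * ∫ a, (X a - Y a) ^ 2 ∂π := by
          rw [← integral_const_mul]
          apply integral_congr_ae
          filter_upwards with a
          simp only [hu, hv]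
          ring
        have e2 : (∫ a, |u a - v a| * |v a| ∂π) = ξ ^ 2 * ∫ a, |X a - Y a| * |Y a| ∂π := by
          rw [← integral_const_mul]
          apply integral_congr_ae
          filter_upwards with a
          simp only [hu, hv]
          rw [show -(X a * ξ) - -(Y a * ξ) = (X a - Y a) * -ξ by ring,
            show -(Y a * ξ) = Y a * -ξ by ring, abs_mul, abs_mul]
          simp only [abs_neg]
          rw [← _root_.sq_abs ξ]
          ring
        have hCS : (∫ a, |X a - Y a| * |Y a| ∂π)
            ≤ Real.sqrt (∫ a, (X a - Y a) ^ 2 ∂π) * Real.sqrt (∫ a, (Y a) ^ 2 ∂π) := by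
          have hpq : Real.HolderConjugate 2 2 := Real.HolderConjugate.two_two
          have hm1 : MemLp (fun a => |X a - Y a|) (ENNReal.ofReal 2) π := by
            rw [show ENNReal.ofReal 2 = 2 by norm_num]
            refine (memLp_two_iff_integrable_sq
              (continuous_abs.comp_aestronglyMeasurable (hXm.sub hYm))).2 ?_
            exact hsub2.congr (Filter.Eventually.of_forall fun a => by
              simp [_root_.sq_abs])
          have hm2 : MemLp (fun a => |Y a|) (ENNReal.ofReal 2) π := by
            rw [show ENNReal.ofReal 2 = 2 by norm_num]
            refine (memLp_two_iff_integrable_sq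
              (continuous_abs.comp_aestronglyMeasurable hYm)).2 ?_
            exact hY2.congr (Filter.Eventually.of_forall fun a => by simp [_root_.sq_abs])
          have h := integral_mul_le_Lp_mul_Lq_of_nonneg hpq
            (Filter.Eventually.of_forall fun a => abs_nonneg _)
            (Filter.Eventually.of_forall fun a => abs_nonneg _) hm1 hm2
          calc (∫ a, |X a - Y a| * |Y a| ∂π)
              ≤ (∫ a, |X a - Y a| ^ (2:ℝ) ∂π) ^ ((1:ℝ)/2) * (∫ a, |Y a| ^ (2:ℝ) ∂π) ^ ((1:ℝ)/2) := h
            _ = Real.sqrt (∫ a, (X a - Y a) ^ 2 ∂π) * Real.sqrt (∫ a, (Y a) ^ 2 ∂π) := by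
                rw [Real.sqrt_eq_rpow, Real.sqrt_eq_rpow]
                congr 2
                · apply integral_congr_ae
                  filter_upwards with a
                  rw [show ((2:ℝ)) = ((2:ℕ):ℝ) by norm_num, Real.rpow_natCast, _root_.sq_abs]
                · apply integral_congr_ae
                  filter_upwards with a
                  rw [show ((2:ℝ)) = ((2:ℕ):ℝ) by norm_num, Real.rpow_natCast, _root_.sq_abs]
        have hsqrt_nonneg : 0 ≤ ξ ^ 2 := sq_nonneg ξ
        nlinarith [e1, e2, hCS, sq_nonneg ξ]

lemma coupling_prob {π : Measure (ℝ × ℝ)} {f g : Measure ℝ} [IsProbabilityMeasure f]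
    (hπ : IsCouplingR π f g) : IsProbabilityMeasure π := by
  constructor
  have h : π.map Prod.fst Set.univ = 1 := by rw [hπ.1]; exact measure_univ
  rwa [Measure.map_apply measurable_fst MeasurableSet.univ, Set.preimage_univ] at h

lemma coupling_integral_fst {E : Type*} [NormedAddCommGroup E] [NormedSpace ℝ E]
    {π : Measure (ℝ × ℝ)} {f g : Measure ℝ} (hπ : IsCouplingR π f g) {h : ℝ → E}
    (hc : Continuous h) : ∫ x, h x ∂f = ∫ p, h p.1 ∂π := by
  rw [← hπ.1, integral_map measurable_fst.aemeasurable hc.aestronglyMeasurable]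

lemma coupling_integral_snd {E : Type*} [NormedAddCommGroup E] [NormedSpace ℝ E]
    {π : Measure (ℝ × ℝ)} {f g : Measure ℝ} (hπ : IsCouplingR π f g) {h : ℝ → E}
    (hc : Continuous h) : ∫ x, h x ∂g = ∫ p, h p.2 ∂π := by
  rw [← hπ.2, integral_map measurable_snd.aemeasurable hc.aestronglyMeasurable]

lemma coupling_int_fst {π : Measure (ℝ × ℝ)} {f g : Measure ℝ} (hπ : IsCouplingR π f g)
    {h : ℝ → ℝ} (hc : Continuous h) (hint : Integrable h f) :
    Integrable (fun p : ℝ × ℝ => h p.1) π := by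
  have h2 : Integrable h (π.map Prod.fst) := by rw [hπ.1]; exact hint
  exact (integrable_map_measure hc.aestronglyMeasurable measurable_fst.aemeasurable).1 h2

lemma coupling_int_snd {π : Measure (ℝ × ℝ)} {f g : Measure ℝ} (hπ : IsCouplingR π f g)
    {h : ℝ → ℝ} (hc : Continuous h) (hint : Integrable h g) :
    Integrable (fun p : ℝ × ℝ => h p.2) π := by
  have h2 : Integrable h (π.map Prod.snd) := by rw [hπ.2]; exact hint
  exact (integrable_map_measure hc.aestronglyMeasurable measurable_snd.aemeasurable).1 h2

lemma integrable_id_of_sq {f : Measure ℝ} [IsProbabilityMeasure f]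
    (hf2 : Integrable (fun x : ℝ => |x| ^ 2) f) : Integrable (fun x : ℝ => x) f := by
  refine Integrable.mono' ((integrable_const (1:ℝ)).add hf2) aestronglyMeasurable_id ?_
  filter_upwards with x
  rw [Real.norm_eq_abs]
  simp only [Pi.add_apply]
  nlinarith [sq_nonneg (|x| - 1), abs_nonneg x]


end AuxProofs

/-- For probability measures `f, g` on `ℝ` with equal mean value and
finite second moments,
`d₂(f,g) ≤ (1/2) W₂(f,g)² + min{∫ |x|² df, ∫ |x|² dg}^{1/2} · W₂(f,g)`. -/
theorem toscani_two_le_wasserstein_two_real (f g : Measure ℝ)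
    [IsProbabilityMeasure f] [IsProbabilityMeasure g]
    (hf2 : Integrable (fun x : ℝ => |x| ^ 2) f) (hg2 : Integrable (fun x : ℝ => |x| ^ 2) g)
    (hmean : ∫ x, x ∂f = ∫ x, x ∂g) :
    ToscaniR 2 f g ≤
      2⁻¹ * WassersteinR 2 f g ^ 2 +
        ENNReal.ofReal (Real.sqrt (min (∫ x, |x| ^ 2 ∂f) (∫ x, |x| ^ 2 ∂g))) *
          WassersteinR 2 f g := by

  classical
  set mf : ℝ := ∫ x, |x| ^ 2 ∂f with hmf
  set mg : ℝ := ∫ x, |x| ^ 2 ∂g with hmg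
  set c : ℝ≥0∞ := ENNReal.ofReal (Real.sqrt (min mf mg)) with hc
  have hcne : c ≠ ∞ := ENNReal.ofReal_ne_top
  have hf2' : Integrable (fun x : ℝ => x ^ 2) f :=
    hf2.congr (Filter.Eventually.of_forall fun x => by simp [_root_.sq_abs])
  have hg2' : Integrable (fun x : ℝ => x ^ 2) g :=
    hg2.congr (Filter.Eventually.of_forall fun x => by simp [_root_.sq_abs])
  have hf1 : Integrable (fun x : ℝ => x) f := integrable_id_of_sq hf2
  have hg1 : Integrable (fun x : ℝ => x) g := integrable_id_of_sq hg2
  set M : ℝ≥0∞ := ⨅ π : {π : Measure (ℝ × ℝ) // IsCouplingR π f g},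
    ∫⁻ x, ENNReal.ofReal (|x.1 - x.2| ^ (2:ℝ)) ∂π.1 with hM
  -- per coupling facts
  have hIπ : ∀ π : Measure (ℝ × ℝ), IsCouplingR π f g →
      Integrable (fun p : ℝ × ℝ => (p.1 - p.2) ^ 2) π := by
    intro π hπ
    haveI := coupling_prob hπ
    have h1 := coupling_int_fst hπ (continuous_pow 2) hf2'
    have h2 := coupling_int_snd hπ (continuous_pow 2) hg2'
    have h1' := coupling_int_fst hπ (continuous_id' : Continuous fun x : ℝ => x) hf1
    have h2' := coupling_int_snd hπ (continuous_id' : Continuous fun x : ℝ => x) hg1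
    have hXY : Integrable (fun p : ℝ × ℝ => p.1 * p.2) π := by
      refine Integrable.mono' ((h1.add h2).const_mul (1/2))
        (h1'.aestronglyMeasurable.mul h2'.aestronglyMeasurable) ?_
      filter_upwards with p
      rw [Real.norm_eq_abs, abs_mul]
      simp only [Pi.add_apply]
      exact absmul_le _ _
    have h := (h1.add h2).sub (hXY.const_mul 2)
    refine h.congr (Filter.Eventually.of_forall fun p => ?_)
    simp only [Pi.add_apply, Pi.sub_apply]
    ring
  have hlin : ∀ π : Measure (ℝ × ℝ), IsCouplingR π f g →
      (∫⁻ x, ENNReal.ofReal (|x.1 - x.2| ^ (2:ℝ)) ∂π)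
        = ENNReal.ofReal (∫ p, (p.1 - p.2) ^ 2 ∂π) := by
    intro π hπ
    haveI := coupling_prob hπ
    rw [ofReal_integral_eq_lintegral_ofReal (hIπ π hπ)
      (Filter.Eventually.of_forall fun p => sq_nonneg _)]
    apply lintegral_congr
    intro p
    congr 1
    rw [show (2:ℝ) = ((2:ℕ):ℝ) by norm_num, Real.rpow_natCast, _root_.sq_abs]
  -- M is finite
  have hMne : M ≠ ∞ := by
    have hprod : IsCouplingR (f.prod g) f g := by
      constructor
      · rw [Measure.map_fst_prod]; simp
      · rw [Measure.map_snd_prod]; simp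
    have hle : M ≤ ∫⁻ x, ENNReal.ofReal (|x.1 - x.2| ^ (2:ℝ)) ∂(f.prod g) :=
      iInf_le_of_le ⟨f.prod g, hprod⟩ le_rfl
    rw [hlin _ hprod] at hle
    exact ne_top_of_le_ne_top ENNReal.ofReal_ne_top hle
  -- rewrite goal
  have hW : WassersteinR 2 f g = M ^ ((1:ℝ)/2) := by rw [WassersteinR, hM]
  have hWsq : WassersteinR 2 f g ^ (2:ℕ) = M := by
    rw [hW, ← ENNReal.rpow_natCast (M ^ ((1:ℝ)/2)) 2, ← ENNReal.rpow_mul]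
    norm_num
  rw [hWsq, hW]
  -- sup over ξ
  rw [ToscaniR]
  apply iSup_le
  rintro ⟨ξ, hξ⟩
  have hξ2 : (0:ℝ) < ξ ^ 2 := by
    have := mul_pos (abs_pos.2 hξ) (abs_pos.2 hξ)
    nlinarith [_root_.sq_abs ξ]
  -- per-coupling ENNReal bound
  have hcoupling : ∀ π : Measure (ℝ × ℝ), IsCouplingR π f g →
      ENNReal.ofReal (‖fourierT f ξ - fourierT g ξ‖ / |ξ| ^ (2:ℝ))
        ≤ 2⁻¹ * ENNReal.ofReal (∫ p, (p.1 - p.2) ^ 2 ∂π)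
          + c * (ENNReal.ofReal (∫ p, (p.1 - p.2) ^ 2 ∂π)) ^ ((1:ℝ)/2) := by
    intro π hπ
    haveI := coupling_prob hπ
    set Iπ : ℝ := ∫ p, (p.1 - p.2) ^ 2 ∂π with hIπdef
    have hIπnn : 0 ≤ Iπ := integral_nonneg fun p => sq_nonneg _
    have hX1 := coupling_int_fst hπ (continuous_id' : Continuous fun x : ℝ => x) hf1
    have hY1 := coupling_int_snd hπ (continuous_id' : Continuous fun x : ℝ => x) hg1
    have hX2 := coupling_int_fst hπ (continuous_pow 2) hf2'
    have hY2 := coupling_int_snd hπ (continuous_pow 2) hg2'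
    have hmeanπ : ∫ p : ℝ × ℝ, p.1 ∂π = ∫ p : ℝ × ℝ, p.2 ∂π := by
      rw [← coupling_integral_fst hπ (continuous_id' : Continuous fun x : ℝ => x), ← coupling_integral_snd hπ (continuous_id' : Continuous fun x : ℝ => x)]
      exact hmean
    have hdiff : fourierT f ξ - fourierT g ξ
        = ∫ p : ℝ × ℝ, (Complex.exp (-(Complex.I * p.1 * ξ))
            - Complex.exp (-(Complex.I * p.2 * ξ))) ∂π := by
      have hce : Continuous fun x : ℝ => Complex.exp (-(Complex.I * x * ξ)) := by
        continuity
      rw [fourierT, fourierT, coupling_integral_fst hπ hce, coupling_integral_snd hπ hce]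
      rw [← integral_sub]
      · refine Integrable.mono' (integrable_const (1:ℝ))
          (hce.comp continuous_fst).aestronglyMeasurable ?_
        filter_upwards with p
        rw [Complex.norm_exp]
        simp
      · refine Integrable.mono' (integrable_const (1:ℝ))
          (hce.comp continuous_snd).aestronglyMeasurable ?_
        filter_upwards with p
        rw [Complex.norm_exp]
        simp
    have hmom_f : ∫ p : ℝ × ℝ, p.1 ^ 2 ∂π = mf := by
      rw [hmf, ← coupling_integral_fst hπ (continuous_pow 2)]
      exact integral_congr_ae (Filter.Eventually.of_forall fun x => by simp [_root_.sq_abs])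
    have hmom_g : ∫ p : ℝ × ℝ, p.2 ^ 2 ∂π = mg := by
      rw [hmg, ← coupling_integral_snd hπ (continuous_pow 2)]
      exact integral_congr_ae (Filter.Eventually.of_forall fun x => by simp [_root_.sq_abs])
    -- real bound with min
    have habs : ‖fourierT f ξ - fourierT g ξ‖
        ≤ ξ ^ 2 * ((1/2) * Iπ + Real.sqrt (min mf mg) * Real.sqrt Iπ) := by
      rcases le_total mf mg with hminf | hming
      · -- min = mf ; use swapped key
        have hk := key π (fun p => p.2) (fun p => p.1) ξ hY1 hX1 hY2 hX2 hmeanπ.symm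
        have hIflip : ∫ p : ℝ × ℝ, (p.2 - p.1) ^ 2 ∂π = Iπ := by
          rw [hIπdef]
          exact integral_congr_ae (Filter.Eventually.of_forall fun p => by ring)
        have hflip : ‖∫ p : ℝ × ℝ, (Complex.exp (-(Complex.I * p.2 * ξ))
            - Complex.exp (-(Complex.I * p.1 * ξ))) ∂π‖
            = ‖fourierT f ξ - fourierT g ξ‖ := by
          rw [hdiff]
          have hneg : (∫ p : ℝ × ℝ, (Complex.exp (-(Complex.I * p.2 * ξ))
              - Complex.exp (-(Complex.I * p.1 * ξ))) ∂π)
              = -∫ p : ℝ × ℝ, (Complex.exp (-(Complex.I * p.1 * ξ))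
                - Complex.exp (-(Complex.I * p.2 * ξ))) ∂π := by
            rw [← integral_neg]
            exact integral_congr_ae (Filter.Eventually.of_forall fun p => by ring)
          rw [hneg, norm_neg]
        rw [← hflip]
        calc ‖∫ p : ℝ × ℝ, (Complex.exp (-(Complex.I * p.2 * ξ))
            - Complex.exp (-(Complex.I * p.1 * ξ))) ∂π‖
            ≤ ξ ^ 2 * ((1/2) * ∫ p : ℝ × ℝ, (p.2 - p.1) ^ 2 ∂π
              + Real.sqrt (∫ p : ℝ × ℝ, p.1 ^ 2 ∂π)
                * Real.sqrt (∫ p : ℝ × ℝ, (p.2 - p.1) ^ 2 ∂π)) := hk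
          _ = ξ ^ 2 * ((1/2) * Iπ + Real.sqrt mf * Real.sqrt Iπ) := by
              rw [hIflip, hmom_f]
          _ = ξ ^ 2 * ((1/2) * Iπ + Real.sqrt (min mf mg) * Real.sqrt Iπ) := by
              rw [min_eq_left hminf]
      · -- min = mg
        have hk := key π (fun p => p.1) (fun p => p.2) ξ hX1 hY1 hX2 hY2 hmeanπ
        rw [hdiff]
        calc ‖∫ p : ℝ × ℝ, (Complex.exp (-(Complex.I * p.1 * ξ))
            - Complex.exp (-(Complex.I * p.2 * ξ))) ∂π‖
            ≤ ξ ^ 2 * ((1/2) * ∫ p : ℝ × ℝ, (p.1 - p.2) ^ 2 ∂π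
              + Real.sqrt (∫ p : ℝ × ℝ, p.2 ^ 2 ∂π)
                * Real.sqrt (∫ p : ℝ × ℝ, (p.1 - p.2) ^ 2 ∂π)) := hk
          _ = ξ ^ 2 * ((1/2) * Iπ + Real.sqrt (min mf mg) * Real.sqrt Iπ) := by
              rw [← hIπdef, hmom_g, min_eq_right hming]
    have hdivle : ‖fourierT f ξ - fourierT g ξ‖ / |ξ| ^ (2:ℝ)
        ≤ (1/2) * Iπ + Real.sqrt (min mf mg) * Real.sqrt Iπ := by
      rw [show |ξ| ^ (2:ℝ) = ξ ^ 2 by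
        rw [show (2:ℝ) = ((2:ℕ):ℝ) by norm_num, Real.rpow_natCast, _root_.sq_abs]]
      rw [div_le_iff₀ hξ2]
      calc ‖fourierT f ξ - fourierT g ξ‖
          ≤ ξ ^ 2 * ((1/2) * Iπ + Real.sqrt (min mf mg) * Real.sqrt Iπ) := habs
        _ = ((1/2) * Iπ + Real.sqrt (min mf mg) * Real.sqrt Iπ) * ξ ^ 2 := by ring
    calc ENNReal.ofReal (‖fourierT f ξ - fourierT g ξ‖ / |ξ| ^ (2:ℝ))
        ≤ ENNReal.ofReal ((1/2) * Iπ + Real.sqrt (min mf mg) * Real.sqrt Iπ) :=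
          ENNReal.ofReal_le_ofReal hdivle
      _ = ENNReal.ofReal ((1/2) * Iπ)
          + ENNReal.ofReal (Real.sqrt (min mf mg) * Real.sqrt Iπ) := by
          rw [ENNReal.ofReal_add (by positivity) (by positivity)]
      _ = 2⁻¹ * ENNReal.ofReal Iπ + c * (ENNReal.ofReal Iπ) ^ ((1:ℝ)/2) := by
          congr 1
          · rw [ENNReal.ofReal_mul (by norm_num)]
            congr 1
            rw [show (1/2 : ℝ) = (2:ℝ)⁻¹ by norm_num,
              ENNReal.ofReal_inv_of_pos (by norm_num)]
            norm_num
          · rw [ENNReal.ofReal_mul (Real.sqrt_nonneg _), hc]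
            congr 1
            rw [Real.sqrt_eq_rpow, ENNReal.ofReal_rpow_of_nonneg hIπnn (by norm_num)]
  -- limit argument
  set φ : ℝ≥0∞ → ℝ≥0∞ := fun t => 2⁻¹ * t + c * t ^ ((1:ℝ)/2) with hφ
  have hφcont : Continuous φ := by
    apply Continuous.add
    · exact (ENNReal.continuous_const_mul (by norm_num)).comp continuous_id
    · exact (ENNReal.continuous_const_mul hcne).comp ENNReal.continuous_rpow_const
  haveI : Filter.NeBot (nhdsWithin M (Set.Ioi M)) :=
    nhdsGT_neBot_of_exists_gt ⟨∞, lt_top_iff_ne_top.2 hMne⟩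
  have htend : Filter.Tendsto φ (nhdsWithin M (Set.Ioi M)) (nhds (φ M)) :=
    (hφcont.tendsto M).mono_left nhdsWithin_le_nhds
  have hev : ∀ᶠ t in nhdsWithin M (Set.Ioi M),
      ENNReal.ofReal (‖fourierT f ξ - fourierT g ξ‖ / |ξ| ^ (2:ℝ)) ≤ φ t := by
    refine Filter.eventually_of_mem self_mem_nhdsWithin fun t ht => ?_
    obtain ⟨⟨π, hπ⟩, hπlt⟩ := iInf_lt_iff.mp (show M < t from ht)
    have h1 := hcoupling π hπ
    have h2 : ENNReal.ofReal (∫ p, (p.1 - p.2) ^ 2 ∂π) ≤ t := by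
      rw [← hlin π hπ]
      exact le_of_lt hπlt
    refine h1.trans ?_
    show _ ≤ 2⁻¹ * t + c * t ^ ((1:ℝ)/2)
    exact add_le_add (mul_le_mul_right h2 _)
      (mul_le_mul_right (ENNReal.rpow_le_rpow h2 (by norm_num)) _)
  exact ge_of_tendsto htend hev


end
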